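/- arXiv:0803.4238 — 3 statements merged into one kernel-verified Lean document; each statement's English description precedes it below -/
import Mathlib

section
/- Let γ ∈ (0,1), a_k = c·k^{-1-γ} with ∑ a_k = 1, and G(t) = ∏_{k=1}^∞ sin(a_k t)/(a_k t) for real t. Then there exist constants C > 0 and T > 0 such that for all real t with |t| ≥ T, |G(t)| ≤ exp(−C·|t|^{1/(1+γ)}). -/
open Real

set_option maxHeartbeats 1000000

private lemma sinc_abs_le_one (x : ℝ) : |Real.sin x / x| ≤ 1 := by
  rcases eq_or_ne x 0 with h | h
  · simp [h]
  · rw [abs_div]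
    exact div_le_one_of_le₀ Real.abs_sin_le_abs (abs_nonneg x)

private lemma sinc_lower (x : ℝ) (hx : x ≠ 0) (h1 : |x| ≤ 1) :
    1 - x ^ 2 / 4 ≤ Real.sin x / x := by
  have key : ∀ y : ℝ, 0 < y → y ≤ 1 → 1 - y ^ 2 / 4 ≤ Real.sin y / y := by
    intro y hy h1
    rw [le_div_iff₀ hy]
    have := Real.sin_gt_sub_cube hy
    nlinarith
  rcases lt_or_gt_of_ne hx with h | h
  · have := key (-x) (by linarith) (by rwa [abs_of_neg h] at h1)
    rw [Real.sin_neg, neg_div_neg_eq] at this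
    simpa using this
  · exact key x h (by rwa [abs_of_pos h] at h1)

/-- Let `γ ∈ (0,1)`, `a k = c * k^(-1-γ)` with `∑_{k ≥ 1} a k = 1`, and
`G t = ∏' k ≥ 1, sin (a k * t) / (a k * t)` for real `t` (factors interpreted
as `1` when `a k * t = 0`).  Then there are constants `C > 0` and `T > 0`
such that `|G t| ≤ exp (-C * |t| ^ (1/(1+γ)))` whenever `|t| ≥ T`. -/
theorem sinc_product_rapid_decay
    (γ c : ℝ) (hγ : γ ∈ Set.Ioo (0 : ℝ) 1) (hc : 0 < c)
    (a : ℕ → ℝ) (ha : ∀ k : ℕ, 1 ≤ k → a k = c * (k : ℝ) ^ (-(1 + γ)))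
    (hsum : ∑' k : ℕ, a (k + 1) = 1)
    (G : ℝ → ℝ)
    (hG : ∀ t : ℝ, G t = ∏' k : ℕ,
      (if (a (k + 1) * t) = 0 then 1 else Real.sin (a (k + 1) * t) / (a (k + 1) * t))) :
    ∃ C > (0 : ℝ), ∃ T > (0 : ℝ), ∀ t : ℝ, T ≤ |t| →
      |G t| ≤ Real.exp (-C * |t| ^ (1 / (1 + γ))) := by
  obtain ⟨hγ0, hγ1⟩ := hγ
  have hβ0 : (0 : ℝ) < 1 + γ := by linarith
  have he : (0 : ℝ) < Real.exp 1 := Real.exp_pos 1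
  refine ⟨(1/2) * (c / Real.exp 1) ^ (1/(1+γ)), by positivity,
    max 1 (Real.exp 1 / c * 2 ^ (1+γ)), lt_of_lt_of_le one_pos (le_max_left _ _), ?_⟩
  intro t ht
  have ht1 : (1 : ℝ) ≤ |t| := le_trans (le_max_left _ _) ht
  have ht0 : t ≠ 0 := by
    intro h; rw [h, abs_zero] at ht1; norm_num at ht1
  have htpos : (0 : ℝ) < |t| := lt_of_lt_of_le one_pos ht1
  set f : ℕ → ℝ := fun k => if (a (k + 1) * t) = 0 then 1 else
      Real.sin (a (k + 1) * t) / (a (k + 1) * t) with hfdef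
  have hapos : ∀ k : ℕ, 0 < a (k + 1) := by
    intro k
    rw [ha (k + 1) (by omega)]
    have : (0 : ℝ) < ((k + 1 : ℕ) : ℝ) := by positivity
    positivity
  have hx0 : ∀ k : ℕ, a (k + 1) * t ≠ 0 := fun k => mul_ne_zero (hapos k).ne' ht0
  have hfval : ∀ k : ℕ, f k = Real.sin (a (k + 1) * t) / (a (k + 1) * t) :=
    fun k => if_neg (hx0 k)
  have hfabs : ∀ k : ℕ, |f k| ≤ 1 := by
    intro k; rw [hfval k]; exact sinc_abs_le_one _
  have hXpos : ∀ m : ℕ, (0 : ℝ) < ((m + 1 : ℕ) : ℝ) ^ (1 + γ) :=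
    fun m => Real.rpow_pos_of_pos (by positivity) _
  have hxabs : ∀ m : ℕ, |a (m + 1) * t| = c * |t| / ((m + 1 : ℕ) : ℝ) ^ (1 + γ) := by
    intro m
    rw [abs_mul, abs_of_pos (hapos m), ha (m + 1) (by omega),
      Real.rpow_neg (Nat.cast_nonneg _)]
    ring
  -- choose cut points
  set K : ℕ := ⌈c * |t|⌉₊ with hKdef
  set x0 : ℝ := (c * |t| / Real.exp 1) ^ (1/(1+γ)) with hx0def
  have hx0pos : 0 < x0 := Real.rpow_pos_of_pos (by positivity) _
  set N : ℕ := ⌊x0⌋₊ with hNdef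
  set M : ℕ := N + K with hMdef
  -- facts for indices ≥ K
  have hxle1 : ∀ m : ℕ, K ≤ m → |a (m + 1) * t| ≤ 1 := by
    intro m hm
    rw [hxabs m, div_le_one (hXpos m)]
    have h1 : c * |t| ≤ ((m + 1 : ℕ) : ℝ) := by
      refine le_trans (Nat.le_ceil _) ?_
      exact_mod_cast Nat.cast_le.2 (hm.trans (Nat.le_succ m))
    calc c * |t| ≤ ((m + 1 : ℕ) : ℝ) := h1
      _ = ((m + 1 : ℕ) : ℝ) ^ (1 : ℝ) := (Real.rpow_one _).symm
      _ ≤ ((m + 1 : ℕ) : ℝ) ^ (1 + γ) := by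
          apply Real.rpow_le_rpow_of_exponent_le
          · exact_mod_cast Nat.one_le_cast.2 (Nat.succ_le_succ (Nat.zero_le m))
          · linarith
  have hflb : ∀ m : ℕ, K ≤ m → 1 - (a (m + 1) * t) ^ 2 / 4 ≤ f m := by
    intro m hm
    rw [hfval m]
    exact sinc_lower _ (hx0 m) (hxle1 m hm)
  have hx2le : ∀ m : ℕ, K ≤ m → (a (m + 1) * t) ^ 2 ≤ 1 := by
    intro m hm
    have h := abs_le.1 (hxle1 m hm)
    nlinarith [h.1, h.2]
  have hfpos : ∀ m : ℕ, K ≤ m → (3:ℝ)/4 ≤ f m := by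
    intro m hm
    have := hflb m hm
    have := hx2le m hm
    linarith
  -- summability of logs of the tail beyond M
  have hlogsum : Summable (fun n : ℕ => Real.log (f (n + M))) := by
    rw [← summable_abs_iff]
    have hmaj : Summable (fun n : ℕ => (c * |t|) ^ 2 * ((n + 1 : ℕ) : ℝ) ^ (-(2 * (1 + γ)))) := by
      apply Summable.mul_left
      have hbase : Summable (fun n : ℕ => (n : ℝ) ^ (-(2 * (1 + γ)))) :=
        Real.summable_nat_rpow.2 (by linarith)
      exact (summable_nat_add_iff 1).2 hbase
    apply Summable.of_nonneg_of_le (fun n => abs_nonneg _) _ hmaj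
    intro n
    have hKle : K ≤ n + M := le_trans (Nat.le_add_left K N) (Nat.le_add_left M n)
    set x : ℝ := a (n + M + 1) * t with hxdef
    set y : ℝ := f (n + M) with hydef
    have hy1 : y ≤ 1 := le_trans (le_abs_self _) (hfabs _)
    have hylb : 1 - x ^ 2 / 4 ≤ y := hflb _ hKle
    have hx2 : x ^ 2 ≤ 1 := hx2le _ hKle
    have hypos : (0 : ℝ) < y := by linarith [hfpos _ hKle]
    have hlog : |Real.log y| ≤ x ^ 2 := by
      rw [abs_of_nonpos (Real.log_nonpos (by linarith) hy1)]
      have hinv : Real.log y⁻¹ ≤ y⁻¹ - 1 :=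
        Real.log_le_sub_one_of_pos (by positivity)
      rw [Real.log_inv] at hinv
      have h6 : y * y⁻¹ = 1 := mul_inv_cancel₀ hypos.ne'
      nlinarith [hinv, h6, hypos]
    refine le_trans hlog ?_
    have hxabs' : |x| = c * |t| / ((n + M + 1 : ℕ) : ℝ) ^ (1 + γ) := hxabs (n + M)
    have hmono : c * |t| / ((n + M + 1 : ℕ) : ℝ) ^ (1 + γ)
        ≤ c * |t| / ((n + 1 : ℕ) : ℝ) ^ (1 + γ) := by
      apply div_le_div_of_nonneg_left (by positivity) (hXpos n)
      apply Real.rpow_le_rpow (Nat.cast_nonneg _) _ hβ0.le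
      exact_mod_cast Nat.cast_le.2 (Nat.succ_le_succ (Nat.le_add_right n M))
    have hxb : |x| ≤ c * |t| / ((n + 1 : ℕ) : ℝ) ^ (1 + γ) := by
      rw [hxabs']; exact hmono
    have hsq : x ^ 2 ≤ (c * |t| / ((n + 1 : ℕ) : ℝ) ^ (1 + γ)) ^ 2 := by
      rw [← sq_abs]
      exact pow_le_pow_left₀ (abs_nonneg _) hxb 2
    refine le_trans hsq (le_of_eq ?_)
    rw [div_pow, ← Real.rpow_natCast (((n + 1 : ℕ) : ℝ) ^ (1 + γ)) 2,
      ← Real.rpow_mul (Nat.cast_nonneg _), Real.rpow_neg (Nat.cast_nonneg _)]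
    push_cast
    ring
  -- multipliability of the tail and of f
  have hmtail : Multipliable (fun n : ℕ => f (n + M)) := by
    exact Real.multipliable_of_summable_log
      (fun n => by linarith [hfpos (n + M) (le_trans (Nat.le_add_left K N) (Nat.le_add_left M n))])
      hlogsum
  have hmult : Multipliable f := ⟨_, hmtail.hasProd.prod_range_mul⟩
  have hmtailabs : Multipliable (fun n : ℕ => |f (n + M)|) := by
    have := hmtail.norm
    simpa [Real.norm_eq_abs] using this
  have hmabs : Multipliable (fun k : ℕ => |f k|) := by
    have := hmult.norm
    simpa [Real.norm_eq_abs] using this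
  -- splitting of the product of absolute values
  have hsplit : (∏ i ∈ Finset.range M, |f i|) * ∏' i : ℕ, |f (i + M)| = ∏' i : ℕ, |f i| :=
    Multipliable.prod_mul_tprod_nat_mul' hmtailabs
  -- tail bounds
  have htail01 : (0 : ℝ) ≤ (∏' i : ℕ, |f (i + M)|) ∧ (∏' i : ℕ, |f (i + M)|) ≤ 1 := by
    have hp := hmtailabs.hasProd
    constructor
    · exact ge_of_tendsto' hp (fun s => Finset.prod_nonneg (fun i _ => abs_nonneg _))
    · exact le_of_tendsto' hp (fun s => Finset.prod_le_one
        (fun i _ => abs_nonneg _) (fun i _ => hfabs _))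
  -- quantitative facts about N
  have hT' : Real.exp 1 / c * 2 ^ (1+γ) ≤ |t| := le_trans (le_max_right _ _) ht
  have h2b : (0:ℝ) < (2:ℝ) ^ (1+γ) := Real.rpow_pos_of_pos two_pos _
  have hct : (2:ℝ) ^ (1+γ) ≤ c * |t| / Real.exp 1 := by
    rw [le_div_iff₀ he]
    calc (2:ℝ) ^ (1+γ) * Real.exp 1 = c * (Real.exp 1 / c * 2 ^ (1+γ)) := by
          field_simp
      _ ≤ c * |t| := mul_le_mul_of_nonneg_left hT' hc.le
  have hx02 : (2 : ℝ) ≤ x0 := by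
    calc (2:ℝ) = ((2:ℝ) ^ (1+γ)) ^ (1/(1+γ)) := by
          rw [← Real.rpow_mul (by norm_num), mul_one_div, div_self hβ0.ne', Real.rpow_one]
      _ ≤ x0 := Real.rpow_le_rpow h2b.le hct (by positivity)
  have hNx : (N : ℝ) ≤ x0 := Nat.floor_le hx0pos.le
  have hxN : x0 - 1 < (N : ℝ) := Nat.sub_one_lt_floor x0
  have hNhalf : x0 / 2 ≤ (N : ℝ) := by linarith
  -- per-factor bound in the head range
  have hhead : ∀ k ∈ Finset.range N, |f k| ≤ Real.exp (-1) := by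
    intro k hk
    rw [Finset.mem_range] at hk
    have hmN : ((k + 1 : ℕ) : ℝ) ≤ (N : ℝ) := by exact_mod_cast Nat.cast_le.2 hk
    have hmb : ((k + 1 : ℕ) : ℝ) ^ (1+γ) ≤ c * |t| / Real.exp 1 := by
      calc ((k + 1 : ℕ) : ℝ) ^ (1+γ) ≤ x0 ^ (1+γ) :=
            Real.rpow_le_rpow (Nat.cast_nonneg _) (le_trans hmN hNx) hβ0.le
        _ = c * |t| / Real.exp 1 := by
            rw [hx0def, ← Real.rpow_mul (by positivity), one_div,
              inv_mul_cancel₀ hβ0.ne', Real.rpow_one]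
    have hxe : Real.exp 1 ≤ |a (k + 1) * t| := by
      rw [hxabs k, le_div_iff₀ (hXpos k)]
      calc Real.exp 1 * ((k + 1 : ℕ) : ℝ) ^ (1+γ)
          ≤ Real.exp 1 * (c * |t| / Real.exp 1) := mul_le_mul_of_nonneg_left hmb he.le
        _ = c * |t| := by field_simp
    have hxap : (0 : ℝ) < |a (k + 1) * t| := lt_of_lt_of_le he hxe
    rw [hfval k, abs_div]
    calc |Real.sin (a (k + 1) * t)| / |a (k + 1) * t|
        ≤ 1 / |a (k + 1) * t| := by
          gcongr
          · exact Real.abs_sin_le_one _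
      _ ≤ 1 / Real.exp 1 := one_div_le_one_div_of_le he hxe
      _ = Real.exp (-1) := by rw [Real.exp_neg, one_div]
  -- head product bound
  have hheadprod : (∏ i ∈ Finset.range M, |f i|) ≤ Real.exp (-1) ^ N := by
    rw [hMdef, Finset.prod_range_add]
    have h1 : (∏ i ∈ Finset.range N, |f i|) ≤ ∏ i ∈ Finset.range N, Real.exp (-1) :=
      Finset.prod_le_prod (fun i _ => abs_nonneg _) hhead
    have h2 : (∏ i ∈ Finset.range K, |f (N + i)|) ≤ 1 :=
      Finset.prod_le_one (fun i _ => abs_nonneg _) (fun i _ => hfabs _)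
    have h3 : (0:ℝ) ≤ ∏ i ∈ Finset.range N, |f i| :=
      Finset.prod_nonneg (fun i _ => abs_nonneg _)
    calc (∏ i ∈ Finset.range N, |f i|) * ∏ i ∈ Finset.range K, |f (N + i)|
        ≤ (∏ i ∈ Finset.range N, |f i|) * 1 := by
          apply mul_le_mul_of_nonneg_left h2 h3
      _ = ∏ i ∈ Finset.range N, |f i| := mul_one _
      _ ≤ ∏ i ∈ Finset.range N, Real.exp (-1) := h1
      _ = Real.exp (-1) ^ N := by rw [Finset.prod_const, Finset.card_range]
  -- put everything together
  have hGabs : |G t| = ∏' i : ℕ, |f i| := by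
    rw [hG t, ← hfdef, ← Real.norm_eq_abs, Multipliable.norm_tprod hmult]
    simp [Real.norm_eq_abs]
  rw [hGabs, ← hsplit]
  have hfinal : (∏ i ∈ Finset.range M, |f i|) * (∏' i : ℕ, |f (i + M)|)
      ≤ Real.exp (-1) ^ N := by
    calc (∏ i ∈ Finset.range M, |f i|) * (∏' i : ℕ, |f (i + M)|)
        ≤ (∏ i ∈ Finset.range M, |f i|) * 1 := by
          apply mul_le_mul_of_nonneg_left htail01.2
          exact Finset.prod_nonneg (fun i _ => abs_nonneg _)
      _ = ∏ i ∈ Finset.range M, |f i| := mul_one _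
      _ ≤ Real.exp (-1) ^ N := hheadprod
  refine le_trans hfinal ?_
  rw [← Real.exp_nat_mul]
  apply Real.exp_le_exp.2
  have hCx : (1/2) * (c / Real.exp 1) ^ (1/(1+γ)) * |t| ^ (1/(1+γ)) = x0 / 2 := by
    have hsplitbase : c * |t| / Real.exp 1 = (c / Real.exp 1) * |t| := by ring
    rw [hx0def, hsplitbase, Real.mul_rpow (by positivity) (abs_nonneg t)]
    ring
  rw [neg_mul, hCx]
  have : x0 / 2 ≤ (N : ℝ) := hNhalf
  nlinarith [this]
end

section
/- For ν > 1, define M_ν(r) = (∫_{-∞}^{∞} e^{r|u| − |u|^ν} du)^{1/2} for r > 0. Then log M_ν(r) ∼ (ν−1)·r^{ν/(ν−1)} / (2·ν^{ν/(ν−1)}) as r → ∞, i.e. the ratio of the two sides tends to 1. -/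
open Real MeasureTheory Filter Set

lemma aux_young {ν : ℝ} (hν : 1 < ν) {a b t : ℝ} (ha : 0 < a) (hb : 0 ≤ b) (ht : 0 ≤ t) :
    b * t - a * t ^ ν ≤ (ν - 1) * a * (b / (ν * a)) ^ (ν / (ν - 1)) := by
  have hν0 : (0:ℝ) < ν := by linarith
  have hν1 : (0:ℝ) < ν - 1 := by linarith
  set p : ℝ := ν / (ν - 1) with hp
  have hp1 : 1 < p := by rw [hp, lt_div_iff₀ hν1]; linarith
  have hconj : ν.HolderConjugate p := (Real.holderConjugate_iff_eq_conjExponent hν).2 rfl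
  have hνa : (0:ℝ) < ν * a := by positivity
  set A : ℝ := (ν * a) ^ (ν⁻¹ : ℝ) with hA
  have hA0 : 0 < A := Real.rpow_pos_of_pos hνa _
  have key := Real.young_inequality_of_nonneg (mul_nonneg hA0.le ht)
    (div_nonneg hb hA0.le) hconj
  have hxy : (A * t) * (b / A) = b * t := by field_simp
  have hx : (A * t) ^ ν = (ν * a) * t ^ ν := by
    rw [Real.mul_rpow hA0.le ht, hA, ← Real.rpow_mul hνa.le,
      inv_mul_cancel₀ hν0.ne', Real.rpow_one]
  have hy : (b / A) ^ p = b ^ p / (ν * a) ^ (p - 1) := by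
    rw [Real.div_rpow hb hA0.le, hA, ← Real.rpow_mul hνa.le]
    congr 1
    rw [hp]
    first
    | (field_simp; ring)
    | field_simp
  rw [hxy, hx, hy] at key
  have hr1 : (ν * a) * t ^ ν / ν = a * t ^ ν := by field_simp
  have hr2 : b ^ p / (ν * a) ^ (p - 1) / p = (ν - 1) * a * (b / (ν * a)) ^ p := by
    rw [Real.div_rpow hb hνa.le, Real.rpow_sub hνa, Real.rpow_one]
    rw [hp]
    field_simp
  rw [hr1, hr2] at key
  linarith

lemma aux_int_exp_neg_abs : Integrable fun x : ℝ => Real.exp (-|x|) := by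
  have h1 : IntegrableOn (fun x : ℝ => Real.exp (-|x|)) (Ioi 0) := by
    refine (exp_neg_integrableOn_Ioi 0 one_pos).congr_fun (fun x hx => ?_) measurableSet_Ioi
    rw [abs_of_pos hx]; simp only [neg_one_mul]
  have h2 : IntegrableOn (fun x : ℝ => Real.exp (-|x|)) (Iic 0) := by
    rw [← Measure.map_neg_eq_self (volume : Measure ℝ)]
    have m : MeasurableEmbedding fun x : ℝ => -x :=
      (Homeomorph.neg ℝ).measurableEmbedding
    rw [m.integrableOn_map_iff]
    simp only [Function.comp_def, abs_neg, neg_preimage, neg_Iic, neg_zero]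
    exact Iff.mpr integrableOn_Ici_iff_integrableOn_Ioi h1
  rw [← integrableOn_univ, ← Iic_union_Ioi (a := (0:ℝ)), integrableOn_union]
  exact ⟨h2, h1⟩

lemma aux_integrable {ν : ℝ} (hν : 1 < ν) (b c : ℝ) (hc : 0 < c) :
    Integrable fun u : ℝ => Real.exp (b * |u| - c * |u| ^ ν) := by
  have hν0 : (0:ℝ) ≤ ν := by linarith
  set K : ℝ := (ν - 1) * c * ((|b| + 1) / (ν * c)) ^ (ν / (ν - 1)) with hK
  have hbd : ∀ u : ℝ, b * |u| - c * |u| ^ ν ≤ K - |u| := by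
    intro u
    have h := aux_young hν (a := c) (b := |b| + 1) (t := |u|) hc
      (by positivity) (abs_nonneg u)
    have : b * |u| ≤ (|b| + 1) * |u| - |u| := by
      have := abs_nonneg u
      have hb' : b ≤ |b| := le_abs_self b
      nlinarith
    linarith
  have hcont : Continuous fun u : ℝ => Real.exp (b * |u| - c * |u| ^ ν) :=
    Real.continuous_exp.comp ((continuous_const.mul continuous_abs).sub
      (continuous_const.mul (continuous_abs.rpow_const fun x => Or.inr hν0)))
  refine Integrable.mono (aux_int_exp_neg_abs.const_mul (Real.exp K))
    hcont.aestronglyMeasurable (Filter.Eventually.of_forall fun u => ?_)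
  calc ‖Real.exp (b * |u| - c * |u| ^ ν)‖ = Real.exp (b * |u| - c * |u| ^ ν) := by
        rw [Real.norm_eq_abs, Real.abs_exp]
    _ ≤ Real.exp (K - |u|) := Real.exp_le_exp.2 (hbd u)
    _ = Real.exp K * Real.exp (-|u|) := by rw [← Real.exp_add]; ring_nf
    _ ≤ ‖Real.exp K * Real.exp (-|u|)‖ := le_abs_self _

lemma aux_pos {f : ℝ → ℝ} (hint : Integrable f) (hf : ∀ x, 0 < f x) :
    0 < ∫ x, f x := by
  rw [integral_pos_iff_support_of_nonneg (fun x => (hf x).le) hint]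
  have : Function.support f = Set.univ := by
    ext x; simp [Function.support, (hf x).ne']
  rw [this]
  simp

lemma aux_lower {ν ε r : ℝ} (hν : 1 < ν) (hε0 : 0 < ε) (hε1 : ε < 1) (hr : ν ≤ r) :
    Real.log (ε * (r / ν) ^ ((ν - 1)⁻¹ : ℝ))
      + (ν * (1 - ε) - 1) * ((r / ν) ^ ((ν - 1)⁻¹ : ℝ)) ^ ν
      ≤ Real.log (∫ u : ℝ, Real.exp (r * |u| - |u| ^ ν)) := by
  have hν0 : (0:ℝ) < ν := by linarith
  have hν1 : (0:ℝ) < ν - 1 := by linarith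
  have hr0 : (0:ℝ) < r := lt_of_lt_of_le hν0 hr
  have hrν : (1:ℝ) ≤ r / ν := (one_le_div hν0).2 hr
  set x : ℝ := (r / ν) ^ ((ν - 1)⁻¹ : ℝ) with hx
  have hx1 : 1 ≤ x := Real.one_le_rpow hrν (by positivity)
  have hx0 : 0 < x := lt_of_lt_of_le one_pos hx1
  have hxν : x ^ (ν - 1 : ℝ) = r / ν := by
    rw [hx, ← Real.rpow_mul (by positivity), inv_mul_cancel₀ hν1.ne', Real.rpow_one]
  have hrx : r * x = ν * x ^ ν := by
    have : x ^ (ν : ℝ) = x ^ (ν - 1 : ℝ) * x := by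
      rw [← Real.rpow_add_one hx0.ne' (ν - 1)]; ring_nf
    rw [this, hxν]
    first
    | (field_simp; ring)
    | field_simp
  set m : ℝ := (ν * (1 - ε) - 1) * x ^ ν with hm
  have hf : Integrable fun u : ℝ => Real.exp (r * |u| - |u| ^ ν) := by
    have := aux_integrable hν r 1 one_pos
    simpa using this
  set s : Set ℝ := Icc ((1 - ε) * x) x with hs
  have hptwise : ∀ u ∈ s, Real.exp m ≤ Real.exp (r * |u| - |u| ^ ν) := by
    intro u hu
    obtain ⟨h1, h2⟩ := hu
    have hu0 : 0 ≤ u := le_trans (by nlinarith) h1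
    rw [abs_of_nonneg hu0]
    apply Real.exp_le_exp.2
    have huν : u ^ (ν:ℝ) ≤ x ^ (ν:ℝ) := Real.rpow_le_rpow hu0 h2 hν0.le
    have hru : r * ((1 - ε) * x) ≤ r * u := by nlinarith
    have : r * ((1 - ε) * x) = ν * (1 - ε) * x ^ ν := by
      rw [show r * ((1 - ε) * x) = (1 - ε) * (r * x) by ring, hrx]; ring
    nlinarith
  have hmeas : (volume s).toReal = ε * x := by
    rw [hs, Real.volume_Icc, ENNReal.toReal_ofReal (by nlinarith)]
    ring
  have hineq1 : ε * x * Real.exp m ≤ ∫ u in s, Real.exp (r * |u| - |u| ^ ν) := by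
    have h := setIntegral_mono_on (integrableOn_const measure_Icc_lt_top.ne)
      hf.integrableOn measurableSet_Icc hptwise
    rw [setIntegral_const, smul_eq_mul] at h; rw [← hmeas]; exact h
  have hineq2 : (∫ u in s, Real.exp (r * |u| - |u| ^ ν))
      ≤ ∫ u : ℝ, Real.exp (r * |u| - |u| ^ ν) :=
    setIntegral_le_integral hf (Filter.Eventually.of_forall fun u => (Real.exp_pos _).le)
  have hpos : 0 < ε * x * Real.exp m := by positivity
  calc Real.log (ε * x) + m = Real.log (ε * x * Real.exp m) := by
        rw [Real.log_mul (by positivity) (Real.exp_pos _).ne', Real.log_exp]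
    _ ≤ Real.log (∫ u : ℝ, Real.exp (r * |u| - |u| ^ ν)) :=
        Real.log_le_log hpos (le_trans hineq1 hineq2)

lemma aux_upper {ν ε r : ℝ} (hν : 1 < ν) (hε0 : 0 < ε) (hε1 : ε < 1) (hr : 0 ≤ r) :
    Real.log (∫ u : ℝ, Real.exp (r * |u| - |u| ^ ν))
      ≤ (ν - 1) * (1 - ε) * (r / (ν * (1 - ε))) ^ (ν / (ν - 1))
        + Real.log (∫ u : ℝ, Real.exp (0 * |u| - ε * |u| ^ ν)) := by
  have hε1' : (0:ℝ) < 1 - ε := by linarith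
  set B : ℝ := (ν - 1) * (1 - ε) * (r / (ν * (1 - ε))) ^ (ν / (ν - 1)) with hB
  have hf : Integrable fun u : ℝ => Real.exp (r * |u| - |u| ^ ν) := by
    simpa using aux_integrable hν r 1 one_pos
  have hg : Integrable fun u : ℝ => Real.exp (0 * |u| - ε * |u| ^ ν) :=
    aux_integrable hν 0 ε hε0
  have hpt : ∀ u : ℝ, Real.exp (r * |u| - |u| ^ ν)
      ≤ Real.exp B * Real.exp (0 * |u| - ε * |u| ^ ν) := by
    intro u
    rw [← Real.exp_add]
    apply Real.exp_le_exp.2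
    have h := aux_young hν (a := 1 - ε) (b := r) (t := |u|) hε1' hr (abs_nonneg u)
    nlinarith [Real.rpow_nonneg (abs_nonneg u) ν]
  have hint : (∫ u : ℝ, Real.exp (r * |u| - |u| ^ ν))
      ≤ Real.exp B * ∫ u : ℝ, Real.exp (0 * |u| - ε * |u| ^ ν) := by
    rw [← integral_const_mul]
    exact integral_mono hf (hg.const_mul _) hpt
  have hC : 0 < ∫ u : ℝ, Real.exp (0 * |u| - ε * |u| ^ ν) :=
    aux_pos hg fun u => Real.exp_pos _
  have hI : 0 < ∫ u : ℝ, Real.exp (r * |u| - |u| ^ ν) :=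
    aux_pos hf fun u => Real.exp_pos _
  calc Real.log (∫ u : ℝ, Real.exp (r * |u| - |u| ^ ν))
      ≤ Real.log (Real.exp B * ∫ u : ℝ, Real.exp (0 * |u| - ε * |u| ^ ν)) :=
        Real.log_le_log hI hint
    _ = B + Real.log (∫ u : ℝ, Real.exp (0 * |u| - ε * |u| ^ ν)) := by
        rw [Real.log_mul (Real.exp_pos _).ne' hC.ne', Real.log_exp]

/-- For `ν > 1`, let `M_ν r = (∫_ℝ exp (r * |u| - |u| ^ ν) du) ^ (1/2)`.
Then `log (M_ν r) ∼ (ν - 1) * r ^ (ν/(ν-1)) / (2 * ν ^ (ν/(ν-1)))` as `r → ∞`,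
in the sense that the ratio of the two sides tends to `1`. -/
theorem log_M_asymptotics (ν : ℝ) (hν : 1 < ν)
    (M : ℝ → ℝ)
    (hM : ∀ r : ℝ, M r = (∫ u : ℝ, Real.exp (r * |u| - |u| ^ ν)) ^ ((1 : ℝ) / 2)) :
    Tendsto (fun r : ℝ =>
        Real.log (M r) / ((ν - 1) * r ^ (ν / (ν - 1)) / (2 * ν ^ (ν / (ν - 1)))))
      atTop (nhds 1) := by
  have hν0 : (0:ℝ) < ν := by linarith
  have hν1 : (0:ℝ) < ν - 1 := by linarith
  set p : ℝ := ν / (ν - 1) with hp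
  have hp0 : 0 < p := by positivity
  set L : ℝ → ℝ := fun r => Real.log (∫ u : ℝ, Real.exp (r * |u| - |u| ^ ν)) with hL
  set S : ℝ → ℝ := fun r => (ν - 1) * (r / ν) ^ p with hS
  have hf : ∀ r : ℝ, Integrable fun u : ℝ => Real.exp (r * |u| - |u| ^ ν) := by
    intro r; simpa using aux_integrable hν r 1 one_pos
  have hIpos : ∀ r : ℝ, 0 < ∫ u : ℝ, Real.exp (r * |u| - |u| ^ ν) :=
    fun r => aux_pos (hf r) fun u => Real.exp_pos _
  have hSpos : ∀ r : ℝ, 0 < r → 0 < S r := by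
    intro r hr; exact mul_pos hν1 (Real.rpow_pos_of_pos (by positivity) _)
  have hStop : Tendsto S atTop atTop := by
    apply Tendsto.const_mul_atTop hν1
    exact (tendsto_rpow_atTop hp0).comp (tendsto_id.atTop_div_const hν0)
  have hcongr : ∀ᶠ r : ℝ in atTop,
      Real.log (M r) / ((ν - 1) * r ^ p / (2 * ν ^ p)) = L r / S r := by
    filter_upwards [eventually_gt_atTop (0:ℝ)] with r hr
    have h1 : Real.log (M r) = (1/2) * L r := by
      rw [hM r, Real.log_rpow (hIpos r)]
    have h2 : (ν - 1) * r ^ p / (2 * ν ^ p) = S r / 2 := by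
      show _ = (ν - 1) * (r / ν) ^ p / 2
      rw [Real.div_rpow hr.le hν0.le]
      have hνp : (0:ℝ) < ν ^ p := Real.rpow_pos_of_pos hν0 _
      field_simp
    rw [h1, h2]
    have hS0 : S r ≠ 0 := (hSpos r hr).ne'
    show (1/2) * L r / (S r / 2) = L r / S r
    field_simp
  refine Tendsto.congr' (hcongr.mono fun r h => h.symm) ?_
  rw [tendsto_order]
  constructor
  · -- lower bound
    intro a ha
    set ε : ℝ := min (1/2) ((ν - 1) * (1 - a) / (2 * ν)) with hε
    have hε0 : 0 < ε := lt_min (by norm_num)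
      (div_pos (by nlinarith) (by positivity))
    have hε1 : ε < 1 := lt_of_le_of_lt (min_le_left _ _) (by norm_num)
    set c : ℝ := (ν * (1 - ε) - 1) / (ν - 1) with hc
    have hac : a < c := by
      have h1 : ε ≤ (ν - 1) * (1 - a) / (2 * ν) := min_le_right _ _
      rw [hc, lt_div_iff₀ hν1]
      rw [le_div_iff₀ (by positivity : (0:ℝ) < 2 * ν)] at h1
      nlinarith
    have hT : Tendsto (fun r : ℝ =>
        Real.log (ε * (r / ν) ^ ((ν - 1)⁻¹ : ℝ)) / S r) atTop (nhds 0) := by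
      have hx : Tendsto (fun r : ℝ => (r / ν) ^ ((ν - 1)⁻¹ : ℝ)) atTop atTop :=
        (tendsto_rpow_atTop (by positivity)).comp (tendsto_id.atTop_div_const hν0)
      have hg : Tendsto (fun y : ℝ => Real.log (ε * y) / ((ν - 1) * y ^ (ν:ℝ)))
          atTop (nhds 0) := by
        have h1 : Tendsto (fun y : ℝ => Real.log ε / ((ν - 1) * y ^ (ν:ℝ))) atTop (nhds 0) :=
          Tendsto.div_atTop tendsto_const_nhds
            (Tendsto.const_mul_atTop hν1 (tendsto_rpow_atTop hν0))
        have h2 : Tendsto (fun y : ℝ => (Real.log y / y ^ (ν:ℝ)) / (ν - 1))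
            atTop (nhds 0) := by
          simpa using
            ((isLittleO_log_rpow_atTop hν0).tendsto_div_nhds_zero).div_const (ν-1)
        have h3 := h1.add h2
        rw [add_zero] at h3
        refine h3.congr' ?_
        filter_upwards [eventually_gt_atTop (0:ℝ)] with y hy
        have hyν : (0:ℝ) < y ^ (ν:ℝ) := Real.rpow_pos_of_pos hy _
        rw [Real.log_mul hε0.ne' hy.ne']
        field_simp
      refine (hg.comp hx).congr' ?_
      filter_upwards [eventually_gt_atTop (0:ℝ)] with r hr
      have hrν : (0:ℝ) ≤ r / ν := by positivity
      have hxp : (((r / ν) ^ ((ν - 1)⁻¹ : ℝ)) ^ (ν:ℝ)) = (r / ν) ^ p := by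
        rw [← Real.rpow_mul hrν, hp]
        congr 1
        field_simp
      simp only [Function.comp]
      rw [hxp]
    have hev : ∀ᶠ r : ℝ in atTop,
        a - c < Real.log (ε * (r / ν) ^ ((ν - 1)⁻¹ : ℝ)) / S r :=
      hT.eventually (eventually_gt_nhds (by linarith))
    filter_upwards [hev, eventually_ge_atTop ν, eventually_gt_atTop (0:ℝ)]
      with r hevr hrν hr0
    have hlow := aux_lower hν hε0 hε1 hrν
    have hrν' : (0:ℝ) ≤ r / ν := by positivity
    have hxp : (((r / ν) ^ ((ν - 1)⁻¹ : ℝ)) ^ (ν:ℝ)) = (r / ν) ^ p := by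
      rw [← Real.rpow_mul hrν', hp]
      congr 1
      field_simp
    rw [hxp] at hlow
    have hS0 : 0 < S r := hSpos r hr0
    have hdiv : (Real.log (ε * (r / ν) ^ ((ν - 1)⁻¹ : ℝ))
        + (ν * (1 - ε) - 1) * (r / ν) ^ p) / S r ≤ L r / S r :=
      div_le_div_of_nonneg_right hlow hS0.le
    have hrp : (0:ℝ) < (r / ν) ^ p := Real.rpow_pos_of_pos (by positivity) _
    have hsplit : (Real.log (ε * (r / ν) ^ ((ν - 1)⁻¹ : ℝ))
        + (ν * (1 - ε) - 1) * (r / ν) ^ p) / S r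
        = Real.log (ε * (r / ν) ^ ((ν - 1)⁻¹ : ℝ)) / S r + c := by
      rw [show S r = (ν - 1) * (r / ν) ^ p from rfl, hc]
      field_simp
    rw [hsplit] at hdiv
    linarith
  · -- upper bound
    intro b hb
    have hcont : Tendsto (fun e : ℝ => (1 - e) ^ ((1:ℝ) - p)) (nhds 0) (nhds 1) := by
      have h : ContinuousAt (fun e : ℝ => (1 - e) ^ ((1:ℝ) - p)) 0 :=
        ContinuousAt.rpow_const (continuousAt_const.sub continuousAt_id)
          (Or.inl (by norm_num))
      simpa using h.tendsto
    have hev1 : ∀ᶠ e : ℝ in nhds 0, (1 - e) ^ ((1:ℝ) - p) < b :=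
      hcont.eventually_lt_const hb
    have hev2 : ∀ᶠ e : ℝ in nhdsWithin 0 (Ioi 0), (1 - e) ^ ((1:ℝ) - p) < b :=
      hev1.filter_mono nhdsWithin_le_nhds
    have hev3 : ∀ᶠ e : ℝ in nhdsWithin 0 (Ioi 0), e ∈ Ioo (0:ℝ) 1 :=
      Ioo_mem_nhdsGT_of_mem (by constructor <;> norm_num)
    obtain ⟨ε, hεb, hε0, hε1⟩ := (hev2.and hev3).exists
    set C : ℝ := Real.log (∫ u : ℝ, Real.exp (0 * |u| - ε * |u| ^ ν)) with hC
    have hT : Tendsto (fun r : ℝ => C / S r) atTop (nhds 0) :=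
      Tendsto.div_atTop tendsto_const_nhds hStop
    have hε1' : (0:ℝ) < 1 - ε := by linarith
    have hev4 : ∀ᶠ r : ℝ in atTop, C / S r < b - (1 - ε) ^ ((1:ℝ) - p) :=
      hT.eventually_lt_const (by linarith)
    filter_upwards [hev4, eventually_gt_atTop (0:ℝ)] with r h4 hr0
    have hup := aux_upper hν hε0 hε1 hr0.le
    rw [← hp] at hup
    have hBS : (ν - 1) * (1 - ε) * (r / (ν * (1 - ε))) ^ p
        = S r * (1 - ε) ^ ((1:ℝ) - p) := by
      rw [show r / (ν * (1 - ε)) = (r / ν) / (1 - ε) by rw [div_div],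
        Real.div_rpow (by positivity) hε1'.le, Real.rpow_sub hε1', Real.rpow_one]
      have hεp : (0:ℝ) < (1 - ε) ^ p := Real.rpow_pos_of_pos hε1' _
      show _ = (ν - 1) * (r / ν) ^ p * _
      field_simp
    rw [hBS] at hup
    have hS0 : 0 < S r := hSpos r hr0
    have hfin : L r / S r ≤ (1 - ε) ^ ((1:ℝ) - p) + C / S r := by
      calc L r / S r ≤ (S r * (1 - ε) ^ ((1:ℝ) - p) + C) / S r :=
            div_le_div_of_nonneg_right hup hS0.le
        _ = (1 - ε) ^ ((1:ℝ) - p) + C / S r := by field_simp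
    linarith
end

section
/- For ν > 1 there exist constants C₁, C₂ > 0 (depending only on ν) such that for all r ≥ 0, ∑_{k ∈ ℤ} e^{r|k| − |k|^ν} ≤ C₁·exp(C₂·r^{ν/(ν−1)}). -/
open Real

lemma young_aux (ν : ℝ) (hν : 1 < ν) (r x : ℝ) (hr : 0 ≤ r) (hx : 0 ≤ x) :
    r * x ≤ x ^ ν / 2 + (2 : ℝ) ^ (1/(ν-1)) * r ^ (ν/(ν-1)) := by
  have hν1 : (0:ℝ) < ν - 1 := by linarith
  have hp : (0:ℝ) < 1/(ν-1) := by positivity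
  have hxν : 0 ≤ x ^ ν := Real.rpow_nonneg hx ν
  rcases eq_or_lt_of_le hr with hr0 | hr0
  · have h2 : (0:ℝ) ≤ (2 : ℝ) ^ (1/(ν-1)) * r ^ (ν/(ν-1)) := by positivity
    nlinarith
  by_cases hcase : x ≤ (2*r) ^ (1/(ν-1))
  · have h1 : r * x ≤ r * (2*r) ^ (1/(ν-1)) :=
      mul_le_mul_of_nonneg_left hcase hr
    have h2 : (2*r) ^ (1/(ν-1)) = 2 ^ (1/(ν-1)) * r ^ (1/(ν-1)) :=
      Real.mul_rpow (by norm_num) hr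
    have h3 : r * r ^ (1/(ν-1)) = r ^ (ν/(ν-1)) := by
      rw [show ν/(ν-1) = 1 + 1/(ν-1) by field_simp; ring, Real.rpow_add hr0,
        Real.rpow_one]
    calc r * x ≤ r * (2*r) ^ (1/(ν-1)) := h1
      _ = 2 ^ (1/(ν-1)) * (r * r ^ (1/(ν-1))) := by rw [h2]; ring
      _ = 2 ^ (1/(ν-1)) * r ^ (ν/(ν-1)) := by rw [h3]
      _ ≤ x ^ ν / 2 + 2 ^ (1/(ν-1)) * r ^ (ν/(ν-1)) := by nlinarith
  · push_neg at hcase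
    have h2r : (0:ℝ) < 2*r := by linarith
    have hx0 : 0 < x := lt_of_le_of_lt (Real.rpow_nonneg h2r.le _) hcase
    have h1 : 2*r ≤ x ^ (ν-1) := by
      have := Real.rpow_le_rpow (Real.rpow_nonneg h2r.le _) hcase.le hν1.le
      rwa [← Real.rpow_mul h2r.le, one_div,
        inv_mul_cancel₀ (ne_of_gt hν1), Real.rpow_one] at this
    have h2 : x ^ (ν-1) * x = x ^ ν := by
      nth_rewrite 2 [← Real.rpow_one x]
      rw [← Real.rpow_add hx0]; ring_nf
    have h3 : (0:ℝ) ≤ (2 : ℝ) ^ (1/(ν-1)) * r ^ (ν/(ν-1)) := by positivity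
    nlinarith [mul_le_mul_of_nonneg_right h1 hx]

lemma summable_half (ν : ℝ) (hν : 1 < ν) :
    Summable (fun k : ℤ => Real.exp (-(|(k : ℝ)| ^ ν) / 2)) := by
  have hnat : Summable (fun n : ℕ => Real.exp (-((n:ℝ) ^ ν) / 2)) := by
    refine Summable.of_nonneg_of_le (f := fun n : ℕ => Real.exp (-(1/2)) ^ n)
      (fun n => (Real.exp_pos _).le) ?_ ?_
    · intro n
      show Real.exp (-((n:ℝ) ^ ν) / 2) ≤ Real.exp (-(1/2)) ^ n
      rw [← Real.exp_nat_mul]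
      apply Real.exp_le_exp.mpr
      have : (n:ℝ) ≤ (n:ℝ) ^ ν := by
        rcases Nat.eq_zero_or_pos n with h | h
        · simp [h, Real.zero_rpow (by linarith : ν ≠ 0)]
        · have h1 : (1:ℝ) ≤ (n:ℝ) := by exact_mod_cast h
          calc (n:ℝ) = (n:ℝ) ^ (1:ℝ) := (Real.rpow_one _).symm
            _ ≤ (n:ℝ) ^ ν := Real.rpow_le_rpow_of_exponent_le h1 hν.le
      linarith
    · exact summable_geometric_of_lt_one (Real.exp_pos _).le
        (Real.exp_lt_one_iff.mpr (by norm_num))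
  apply Summable.of_nat_of_neg <;> simpa using hnat

/-- For `ν > 1` there are constants `C₁, C₂ > 0` (depending only on `ν`) such that
for all `r ≥ 0` the sum `∑_{k ∈ ℤ} exp (r * |k| - |k| ^ ν)` converges and is bounded
by `C₁ * exp (C₂ * r ^ (ν/(ν-1)))`. -/
theorem sum_exp_bound (ν : ℝ) (hν : 1 < ν) :
    ∃ C₁ > (0 : ℝ), ∃ C₂ > (0 : ℝ), ∀ r : ℝ, 0 ≤ r →
      Summable (fun k : ℤ => Real.exp (r * |(k : ℝ)| - |(k : ℝ)| ^ ν)) ∧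
      (∑' k : ℤ, Real.exp (r * |(k : ℝ)| - |(k : ℝ)| ^ ν)) ≤
        C₁ * Real.exp (C₂ * r ^ (ν / (ν - 1))) := by
  have hsum := summable_half ν hν
  set C₁ : ℝ := ∑' k : ℤ, Real.exp (-(|(k : ℝ)| ^ ν) / 2) with hC₁
  have hC₁pos : 0 < C₁ := Summable.tsum_pos hsum (fun k => (Real.exp_pos _).le) 0 (Real.exp_pos _)
  refine ⟨C₁, hC₁pos, (2:ℝ) ^ (1/(ν-1)), Real.rpow_pos_of_pos (by norm_num) _, ?_⟩
  intro r hr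
  set C₂ : ℝ := (2:ℝ) ^ (1/(ν-1)) with hC₂
  have key : ∀ k : ℤ, Real.exp (r * |(k : ℝ)| - |(k : ℝ)| ^ ν) ≤
      Real.exp (-(|(k : ℝ)| ^ ν) / 2) * Real.exp (C₂ * r ^ (ν/(ν-1))) := by
    intro k
    rw [← Real.exp_add]
    apply Real.exp_le_exp.mpr
    have := young_aux ν hν r |(k:ℝ)| hr (abs_nonneg _)
    linarith
  have hsum2 : Summable (fun k : ℤ =>
      Real.exp (-(|(k : ℝ)| ^ ν) / 2) * Real.exp (C₂ * r ^ (ν/(ν-1)))) :=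
    hsum.mul_right _
  have hS : Summable (fun k : ℤ => Real.exp (r * |(k : ℝ)| - |(k : ℝ)| ^ ν)) :=
    Summable.of_nonneg_of_le (fun k => (Real.exp_pos _).le) key hsum2
  refine ⟨hS, ?_⟩
  calc (∑' k : ℤ, Real.exp (r * |(k : ℝ)| - |(k : ℝ)| ^ ν))
      ≤ ∑' k : ℤ, Real.exp (-(|(k : ℝ)| ^ ν) / 2) * Real.exp (C₂ * r ^ (ν/(ν-1))) :=
        Summable.tsum_le_tsum key hS hsum2
    _ = C₁ * Real.exp (C₂ * r ^ (ν / (ν - 1))) := by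
        rw [tsum_mul_right]
end
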